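/- Fix ρ ∈ [0,1), d ≥ 1, and let w ∈ ℝ^d be the geometric weight vector w_i = (1−ρ)ρ^{i−1}. For every x ∈ ℝ^d with x_i ≥ 0 for all i, one has ∑_{i=1}^d w_i x_{[i]} = ∑_{s ∈ {0,1}^d} ( ∏_{i=1}^d (1−ρ)^{s_i} ρ^{1−s_i} ) · max_{1 ≤ i ≤ d} (s_i x_i), where x_{[i]} denotes the i-th largest entry of x. Equivalently, w^T sort(x) = E_{s ~ Ber(1−ρ)^{⊗d}}[max_i s_i x_i], where the coordinates of s are independent Bernoulli random variables taking value 1 with probability 1−ρ and 0 with probability ρ. -/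

import Mathlib

/-- `sortDesc x i` is the `(i+1)`-th largest entry of `x` (entries arranged in
nonincreasing order). -/
noncomputable def sortDesc {d : ℕ} (x : Fin d → ℝ) : Fin d → ℝ :=
  fun i => x (Tuple.sort x i.rev)

/-- For geometric weights `w_{i+1} = (1−ρ)ρ^i` (0-indexed) and any
`x ∈ ℝᵈ` with nonnegative entries,
`∑_i w_i x_{[i]} = ∑_{s ∈ {0,1}^d} (∏_i (1−ρ)^{s_i} ρ^{1−s_i}) · max_i (s_i x_i)`,
i.e. `wᵀ sort x` is the expectation of `max_i s_i x_i` for i.i.d. Bernoulli(1−ρ)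
coordinates `s_i ∈ {0,1}` (encoded here as Booleans, with `s_i x_i` equal to
`x i` if `s i` and `0` otherwise, and factor `1−ρ` if `s i` and `ρ` otherwise). -/


lemma sup'_comp_perm {α : Type*} [SemilatticeSup α] {n : ℕ} (hne : (Finset.univ : Finset (Fin n)).Nonempty)
    (σ : Equiv.Perm (Fin n)) (g : Fin n → α) :
    Finset.univ.sup' hne (fun i => g (σ i)) = Finset.univ.sup' hne g := by
  apply le_antisymm
  · exact Finset.sup'_le _ _ fun i _ => Finset.le_sup' g (Finset.mem_univ (σ i))
  · refine Finset.sup'_le _ _ fun i _ => ?_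
    have := Finset.le_sup' (fun i => g (σ i)) (Finset.mem_univ (σ.symm i))
    simpa using this

lemma sum_cons_split {n : ℕ} (F : (Fin (n+1) → Bool) → ℝ) :
    ∑ s : Fin (n+1) → Bool, F s =
      (∑ t : Fin n → Bool, F (Fin.cons true t)) + ∑ t : Fin n → Bool, F (Fin.cons false t) := by
  rw [← Fintype.sum_equiv (Fin.consEquiv fun _ => Bool) (fun p => F (Fin.cons p.1 p.2)) F (fun p => rfl)]
  rw [Fintype.sum_prod_type, Fintype.sum_bool]

lemma sumw (ρ : ℝ) : ∀ n : ℕ, ∑ t : Fin n → Bool, ∏ i, (if t i then (1-ρ) else ρ) = 1 := by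
  intro n
  induction n with
  | zero => simp
  | succ n ih =>
    rw [sum_cons_split (fun s => ∏ i, (if s i then (1-ρ) else ρ))]
    simp only [Fin.prod_univ_succ, Fin.cons_zero, Fin.cons_succ, if_true, if_false]
    rw [← Finset.mul_sum, ← Finset.mul_sum, ih]
    norm_num

lemma sup'_univ_succ {m : ℕ} (f : Fin (m+2) → ℝ) (h h') :
    Finset.univ.sup' h f = f 0 ⊔ Finset.univ.sup' h' (fun i : Fin (m+1) => f i.succ) := by
  apply le_antisymm
  · refine Finset.sup'_le _ _ fun i _ => ?_
    induction i using Fin.cases with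
    | zero => exact le_sup_left
    | succ j =>
      exact le_trans (Finset.le_sup' (fun i : Fin (m+1) => f i.succ) (Finset.mem_univ j)) le_sup_right
  · exact sup_le (Finset.le_sup' _ (Finset.mem_univ 0))
      (Finset.sup'_le _ _ fun i _ => Finset.le_sup' f (Finset.mem_univ i.succ))

lemma sorted_case (ρ : ℝ) (hρ0 : 0 ≤ ρ) (hρ1 : ρ < 1) :
    ∀ n (y : Fin (n+1) → ℝ), (∀ i, 0 ≤ y i) → Antitone y →
      (∑ i : Fin (n+1), (1-ρ) * ρ ^ (i:ℕ) * y i) =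
        ∑ s : Fin (n+1) → Bool,
          (∏ i, if s i then (1-ρ) else ρ) *
            Finset.univ.sup' ⟨0, Finset.mem_univ 0⟩ (fun i => (if s i then (1:ℝ) else 0) * y i) := by
  intro n
  induction n with
  | zero =>
    intro y hy hmono
    rw [← Fintype.sum_equiv (Equiv.funUnique (Fin 1) Bool).symm
      (fun b : Bool => (∏ i, if (Equiv.funUnique (Fin 1) Bool).symm b i then (1-ρ) else ρ) *
        Finset.univ.sup' ⟨0, Finset.mem_univ 0⟩
          (fun i => (if (Equiv.funUnique (Fin 1) Bool).symm b i then (1:ℝ) else 0) * y i))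
      _ (fun b => rfl)]
    rw [Fintype.sum_bool]
    simp [Fin.sum_univ_one, Fin.prod_univ_one]
  | succ n ih =>
    intro y hy hmono
    rw [sum_cons_split]
    have htrue : ∀ t : Fin (n+1) → Bool,
        Finset.univ.sup' ⟨0, Finset.mem_univ 0⟩
          (fun i : Fin (n+2) => (if Fin.cons (α := fun _ => Bool) true t i then (1:ℝ) else 0) * y i) = y 0 := by
      intro t
      apply le_antisymm
      · refine Finset.sup'_le _ _ fun i _ => ?_
        by_cases hb : (Fin.cons (α := fun _ => Bool) true t i : Bool) = true
        · simp only [hb, if_true, one_mul]; exact hmono (Fin.zero_le i)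
        · rw [if_neg hb, zero_mul]; exact hy 0
      · have := Finset.le_sup' (fun i : Fin (n+2) => (if Fin.cons (α := fun _ => Bool) true t i then (1:ℝ) else 0) * y i)
          (Finset.mem_univ 0)
        simpa using this
    have hfalse : ∀ t : Fin (n+1) → Bool,
        Finset.univ.sup' ⟨0, Finset.mem_univ 0⟩
          (fun i : Fin (n+2) => (if Fin.cons (α := fun _ => Bool) false t i then (1:ℝ) else 0) * y i) =
        Finset.univ.sup' ⟨0, Finset.mem_univ 0⟩
          (fun i : Fin (n+1) => (if t i then (1:ℝ) else 0) * y i.succ) := by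
      intro t
      refine (sup'_univ_succ _ _ ⟨0, Finset.mem_univ 0⟩).trans ?_
      simp only [Fin.cons_zero, Fin.cons_succ, Bool.false_eq_true, if_false, zero_mul]
      refine sup_eq_right.mpr ?_
      refine le_trans ?_ (Finset.le_sup' (fun i : Fin (n+1) => (if t i then (1:ℝ) else 0) * y i.succ)
        (Finset.mem_univ 0))
      exact mul_nonneg (by split <;> norm_num) (hy _)
    have h1 : (∑ t : Fin (n+1) → Bool,
        (∏ i, if Fin.cons (α := fun _ => Bool) true t i then (1-ρ) else ρ) *
          Finset.univ.sup' ⟨0, Finset.mem_univ 0⟩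
            (fun i : Fin (n+2) => (if Fin.cons (α := fun _ => Bool) true t i then (1:ℝ) else 0) * y i)) = (1-ρ) * y 0 := by
      have step : ∀ t : Fin (n+1) → Bool,
          (∏ i, if Fin.cons (α := fun _ => Bool) true t i then (1-ρ) else ρ) *
            Finset.univ.sup' ⟨0, Finset.mem_univ 0⟩
              (fun i : Fin (n+2) => (if Fin.cons (α := fun _ => Bool) true t i then (1:ℝ) else 0) * y i) =
          (1-ρ) * ((∏ i, if t i then (1-ρ) else ρ) * y 0) := by
        intro t
        rw [htrue t, Fin.prod_univ_succ]
        simp only [Fin.cons_zero, Fin.cons_succ, if_true]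
        ring
      rw [Finset.sum_congr rfl fun t _ => step t, ← Finset.mul_sum, ← Finset.sum_mul, sumw]
      ring
    have h2 : (∑ t : Fin (n+1) → Bool,
        (∏ i, if Fin.cons (α := fun _ => Bool) false t i then (1-ρ) else ρ) *
          Finset.univ.sup' ⟨0, Finset.mem_univ 0⟩
            (fun i : Fin (n+2) => (if Fin.cons (α := fun _ => Bool) false t i then (1:ℝ) else 0) * y i)) =
        ρ * ∑ i : Fin (n+1), (1-ρ) * ρ ^ (i:ℕ) * y i.succ := by
      have step : ∀ t : Fin (n+1) → Bool,
          (∏ i, if Fin.cons (α := fun _ => Bool) false t i then (1-ρ) else ρ) *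
            Finset.univ.sup' ⟨0, Finset.mem_univ 0⟩
              (fun i : Fin (n+2) => (if Fin.cons (α := fun _ => Bool) false t i then (1:ℝ) else 0) * y i) =
          ρ * ((∏ i, if t i then (1-ρ) else ρ) *
            Finset.univ.sup' ⟨0, Finset.mem_univ 0⟩
              (fun i : Fin (n+1) => (if t i then (1:ℝ) else 0) * y i.succ)) := by
        intro t
        rw [hfalse t, Fin.prod_univ_succ]
        simp only [Fin.cons_zero, Fin.cons_succ, Bool.false_eq_true, if_false]
        ring
      rw [Finset.sum_congr rfl fun t _ => step t, ← Finset.mul_sum,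
        ← ih (fun i => y i.succ) (fun i => hy _) (fun a b hab => hmono (Fin.succ_le_succ_iff.mpr hab))]
    rw [h1, h2, Fin.sum_univ_succ]
    have step : ∀ i : Fin (n+1), (1-ρ) * ρ ^ ((i.succ : Fin (n+2)) : ℕ) * y i.succ =
        ρ * ((1-ρ) * ρ ^ (i:ℕ) * y i.succ) := by
      intro i
      rw [Fin.val_succ, pow_succ]
      ring
    rw [Finset.sum_congr rfl fun i _ => step i, ← Finset.mul_sum]
    norm_num

theorem sortNet_bernoulli_expectation
    (ρ : ℝ) (hρ0 : 0 ≤ ρ) (hρ1 : ρ < 1)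
    (d : ℕ) (hd : 0 < d)
    (x : Fin d → ℝ) (hx : ∀ i, 0 ≤ x i) :
    (∑ i : Fin d, (1 - ρ) * ρ ^ (i : ℕ) * sortDesc x i) =
      ∑ s : Fin d → Bool,
        (∏ i : Fin d, if s i then (1 - ρ) else ρ) *
          Finset.univ.sup'
            (Finset.univ_nonempty_iff.mpr (Fin.pos_iff_nonempty.mp hd))
            (fun i => (if s i then (1 : ℝ) else 0) * x i) := by
  obtain ⟨n, rfl⟩ := Nat.exists_eq_succ_of_ne_zero hd.ne'
  set σ : Equiv.Perm (Fin (n+1)) := Fin.revPerm.trans (Tuple.sort x) with hσ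
  have hy : sortDesc x = fun i => x (σ i) := rfl
  have hyn : ∀ i, 0 ≤ x (σ i) := fun i => hx _
  have hmono : Antitone (fun i => x (σ i)) := by
    intro a b hab
    exact Tuple.monotone_sort x (Fin.rev_le_rev.mpr hab)
  rw [hy, sorted_case ρ hρ0 hρ1 n (fun i => x (σ i)) hyn hmono]
  refine Fintype.sum_equiv (Equiv.arrowCongr σ (Equiv.refl Bool)) _ _ fun s => ?_
  congr 1
  · exact (Equiv.prod_comp σ.symm (fun i => if s i then (1-ρ) else ρ)).symm

  · have hfn : (fun i => (if (Equiv.arrowCongr σ (Equiv.refl Bool)) s i then (1:ℝ) else 0) * x i)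
        = fun i => (if s (σ.symm i) then (1:ℝ) else 0) * x i := rfl
    rw [hfn, ← sup'_comp_perm _ σ (fun i => (if s (σ.symm i) then (1:ℝ) else 0) * x i)]
    congr 1
    funext i
    simp
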